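/- Let −1 < B < A ≤ 1 and set p(z) = (1 + Az)/(1 + Bz). If 1/4 ≤ (1 − A)/(1 − B) and (1 + A)/(1 + B) ≤ 9/4, then p is subordinate to φ(z) = (1 + z/2)²; that is, there exists an analytic function w : D → ℂ with w(0) = 0 and |w(z)| < 1 for all z ∈ D such that p(z) = φ(w(z)) for all z ∈ D. -/

import Mathlib

set_option maxHeartbeats 1000000

open Complex


lemma key_ineq (a b t x : ℝ) (ha : 1/4 ≤ a) (hb : b ≤ 9/4) (hab : a < b)
    (hta : a ≤ t) (htb : t ≤ b)
    (hax : t^2 + a*b < (a+b)*x) :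
    t^2 - t/2 + 9/16 < 2*x := by
  have hab2 : (0:ℝ) < a + b := by linarith
  have hFa : (0:ℝ) ≤ (a+b)*(a-1/4)*(9/4-a) :=
    mul_nonneg (mul_nonneg hab2.le (by linarith)) (by linarith)
  have hFb : (0:ℝ) ≤ (a+b)*(b-1/4)*(9/4-b) :=
    mul_nonneg (mul_nonneg hab2.le (by linarith)) (by linarith)
  have hF : 0 ≤ 2*(t^2+a*b) - (a+b)*(t^2 - t/2 + 9/16) := by
    rcases le_or_gt (a+b) 2 with hc | hc
    · nlinarith [mul_nonneg (sub_nonneg.2 hta)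
        (by nlinarith : (0:ℝ) ≤ (2-a-b)*(t+a)+(a+b)/2)]
    · nlinarith [mul_nonneg (mul_nonneg (sub_nonneg.2 hta) (sub_nonneg.2 htb))
        (mul_nonneg (by linarith : (0:ℝ) ≤ a+b-2) (by linarith : (0:ℝ) ≤ b-a)),
        mul_nonneg (sub_nonneg.2 htb) hFa, mul_nonneg (sub_nonneg.2 hta) hFb]
  have h3 : (a+b) * (t^2 - t/2 + 9/16) < (a+b) * (2*x) := by nlinarith
  exact lt_of_mul_lt_mul_left h3 hab2.le

/-- For z in the unit disk, the value v = (1+Az)/(1+Bz) lies in the open disk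
with diameter [a, b] on the real axis. -/
lemma v_in_disk (A B : ℝ) (hB : -1 < B) (hBA : B < A) (hA : A ≤ 1)
    (z : ℂ) (hz : ‖z‖ < 1) :
    ‖(1 + (A:ℂ)*z)/(1 + (B:ℂ)*z)
      - ((((1-A)/(1-B) + (1+A)/(1+B))/2 : ℝ) : ℂ)‖
      < ((1+A)/(1+B) - (1-A)/(1-B))/2 := by
  have hB1 : (0:ℝ) < 1 - B := by linarith
  have hB2 : (0:ℝ) < 1 + B := by linarith
  have hB3 : (0:ℝ) < 1 - B^2 := by nlinarith
  have hden : (1 + (B:ℂ)*z) ≠ 0 := by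
    intro h
    have : ‖(B:ℂ)*z‖ < 1 := by
      rw [norm_mul, Complex.norm_real, Real.norm_eq_abs]
      calc |B| * ‖z‖ ≤ 1 * ‖z‖ := by
            apply mul_le_mul_of_nonneg_right _ (norm_nonneg z)
            rw [abs_le]; constructor <;> linarith
        _ < 1 := by simpa using hz
    have h2 : (B:ℂ)*z = -1 := by linear_combination h
    rw [h2] at this; simp at this
  have hr : ((1+A)/(1+B) - (1-A)/(1-B))/2 = (A-B)/(1-B^2) := by
    field_simp; ring
  have hc : (((1-A)/(1-B) + (1+A)/(1+B))/2 : ℝ) = (1-A*B)/(1-B^2) := by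
    field_simp; ring
  have hB3' : ((1:ℂ) - (B:ℂ)^2) ≠ 0 := by
    intro h
    have : ((1 - B^2 : ℝ) : ℂ) = 0 := by push_cast; linear_combination h
    exact hB3.ne' (by exact_mod_cast this)
  have hid : (1 + (A:ℂ)*z)/(1 + (B:ℂ)*z) - ((((1-A)/(1-B) + (1+A)/(1+B))/2 : ℝ) : ℂ)
      = (((A-B)/(1-B^2) : ℝ) : ℂ) * ((B + z)/(1 + (B:ℂ)*z)) := by
    rw [hc]; push_cast
    rw [div_sub_div _ _ hden hB3', div_mul_div_comm,
      div_eq_div_iff (mul_ne_zero hden hB3') (mul_ne_zero hB3' hden)]; ring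
  rw [hid, hr, norm_mul, Complex.norm_real, Real.norm_eq_abs, norm_div]
  have hnum : ‖(B:ℂ) + z‖ < ‖1 + (B:ℂ)*z‖ := by
    have h1 : Complex.normSq ((B:ℂ) + z) < Complex.normSq (1 + (B:ℂ)*z) := by
      simp only [Complex.normSq_apply, Complex.add_re, Complex.add_im, Complex.mul_re,
        Complex.mul_im, Complex.one_re, Complex.one_im, Complex.ofReal_re, Complex.ofReal_im]
      have hz2 : z.re^2 + z.im^2 < 1 := by
        have h := Complex.sq_norm z
        rw [Complex.normSq_apply] at h
        nlinarith [norm_nonneg z]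
      nlinarith
    have := Real.sqrt_lt_sqrt (Complex.normSq_nonneg _) h1
    rw [Complex.norm_def, Complex.norm_def]; exact this
  have hrpos : (0:ℝ) < (A-B)/(1-B^2) := div_pos (by linarith) hB3
  have habs : ‖(B:ℂ)+z‖ / ‖1 + (B:ℂ)*z‖ < 1 :=
    (div_lt_one (lt_of_le_of_lt (norm_nonneg _) hnum)).2 hnum
  calc |(A-B)/(1-B^2)| * (‖(B:ℂ)+z‖ / ‖1 + (B:ℂ)*z‖)
      < |(A-B)/(1-B^2)| * 1 := by
        exact mul_lt_mul_of_pos_left habs (abs_pos.2 hrpos.ne')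
    _ = (A-B)/(1-B^2) := by rw [mul_one, abs_of_pos hrpos]

lemma den_ne (B : ℝ) (hB : -1 < B) (hB' : B < 1) (z : ℂ) (hz : ‖z‖ < 1) :
    (1 + (B:ℂ)*z) ≠ 0 := by
  intro h
  have h1 : ‖(B:ℂ)*z‖ < 1 := by
    rw [norm_mul, Complex.norm_real, Real.norm_eq_abs]
    calc |B| * ‖z‖ ≤ 1 * ‖z‖ := by
          apply mul_le_mul_of_nonneg_right _ (norm_nonneg z)
          rw [abs_le]; constructor <;> linarith
      _ < 1 := by simpa using hz
  have h2 : (B:ℂ)*z = -1 := by linear_combination h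
  rw [h2] at h1; simp at h1


/-- Let `−1 < B < A ≤ 1` and `p(z) = (1 + Az)/(1 + Bz)`. If `1/4 ≤ (1 − A)/(1 − B)`
and `(1 + A)/(1 + B) ≤ 9/4`, then `p` is subordinate to `φ(z) = (1 + z/2)²`: there is
an analytic `w` on the unit disk with `w(0) = 0`, `|w(z)| < 1`, and `p(z) = φ(w(z))`. -/
theorem p_subordinate_phi (A B : ℝ) (hB : -1 < B) (hBA : B < A) (hA : A ≤ 1)
    (h1 : 1 / 4 ≤ (1 - A) / (1 - B)) (h2 : (1 + A) / (1 + B) ≤ 9 / 4) :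
    ∃ w : ℂ → ℂ, AnalyticOnNhd ℂ w (Metric.ball (0 : ℂ) 1) ∧ w 0 = 0 ∧
      (∀ z ∈ Metric.ball (0 : ℂ) 1, ‖w z‖ < 1) ∧
      (∀ z ∈ Metric.ball (0 : ℂ) 1,
        (1 + (A : ℂ) * z) / (1 + (B : ℂ) * z) = (1 + w z / 2) ^ 2) := by
  have hB' : B < 1 := lt_of_lt_of_le hBA hA
  have hB1 : (0:ℝ) < 1 - B := by linarith
  have hB2 : (0:ℝ) < 1 + B := by linarith
  set a : ℝ := (1-A)/(1-B) with ha_def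
  set b : ℝ := (1+A)/(1+B) with hb_def
  have hab : a < b := by
    rw [ha_def, hb_def, div_lt_div_iff₀ hB1 hB2]; nlinarith
  have ha : 1/4 ≤ a := h1
  have hb : b ≤ 9/4 := h2
  set p : ℂ → ℂ := fun z => (1 + (A:ℂ)*z)/(1 + (B:ℂ)*z) with hp_def
  set E : ℂ → ℂ := fun z => Complex.exp (Complex.log (p z) / 2) with hE_def
  have hfacts : ∀ z : ℂ, ‖z‖ < 1 →
      0 < (p z).re ∧ ‖E z - 1‖ < 1/2 ∧ (E z)^2 = p z := by
    intro z hz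
    have hdisk := v_in_disk A B hB hBA hA z hz
    set v : ℂ := p z with hv_def
    set x : ℝ := v.re
    set y : ℝ := v.im
    set t : ℝ := ‖v‖ with ht_def
    have htnn : 0 ≤ t := norm_nonneg v
    have ht : t^2 = x^2 + y^2 := by
      have e1 := Complex.sq_norm v
      rw [Complex.normSq_apply] at e1
      rw [ht_def]; linear_combination e1
    have hdisk2 : (x - (a+b)/2)^2 + y^2 < ((b-a)/2)^2 := by
      have e2 : (‖v - (((a+b)/2 : ℝ) : ℂ)‖)^2 = (x - (a+b)/2)^2 + y^2 := by
        rw [Complex.sq_norm, Complex.normSq_apply]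
        simp [Complex.sub_re, Complex.sub_im]
        ring
      have e3 : (‖v - (((a+b)/2 : ℝ) : ℂ)‖)^2 < ((b-a)/2)^2 := by
        apply pow_lt_pow_left₀ _ (norm_nonneg _) (by norm_num)
        exact hdisk
      rw [e2] at e3; exact e3
    have hax : t^2 + a*b < (a+b)*x := by nlinarith [ht, hdisk2]
    have habp : (0:ℝ) < a + b := by linarith
    have htx : x ≤ t := le_trans (le_abs_self _) (Complex.abs_re_le_norm v)
    have h4 : t^2 + a*b < (a+b)*t :=
      lt_of_lt_of_le hax (mul_le_mul_of_nonneg_left htx habp.le)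
    have hta : a ≤ t := by
      by_contra h; push_neg at h
      nlinarith [mul_pos (show (0:ℝ) < a - t by linarith) (show (0:ℝ) < b - t by linarith)]
    have htb : t ≤ b := by
      by_contra h; push_neg at h
      nlinarith [mul_pos (show (0:ℝ) < t - a by linarith) (show (0:ℝ) < t - b by linarith)]
    have keyx : t^2 - t/2 + 9/16 < 2*x := key_ineq a b t x ha hb hab hta htb hax
    have xpos : 0 < x := by nlinarith
    have vne : v ≠ 0 := by
      intro h
      rw [show x = v.re from rfl, h] at xpos
      simp at xpos
    have hs2 : (E z)^2 = v := by
      rw [hE_def]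
      show (Complex.exp (Complex.log v / 2))^2 = v
      rw [sq, ← Complex.exp_add]
      have : Complex.log v / 2 + Complex.log v / 2 = Complex.log v := by ring
      rw [this, Complex.exp_log vne]
    set s : ℂ := E z with hs_def
    have hsre : 0 < s.re := by
      rw [hs_def, hE_def]
      show 0 < (Complex.exp (Complex.log v / 2)).re
      rw [Complex.exp_re]
      apply mul_pos (Real.exp_pos _)
      have him : (Complex.log v / 2).im = (Complex.log v).im / 2 := by
        have : ((2:ℂ)) = ((2:ℝ):ℂ) := by norm_num
        rw [this, Complex.div_ofReal_im]
      rw [him, Complex.log_im]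
      apply Real.cos_pos_of_mem_Ioo
      have harg : |Complex.arg v| < Real.pi / 2 :=
        Complex.abs_arg_lt_pi_div_two_iff.2 (Or.inl xpos)
      rw [abs_lt] at harg
      constructor <;> [linarith [Real.pi_pos]; linarith [Real.pi_pos]]
    have h5 : s.re^2 + s.im^2 = t := by
      have e1 := Complex.sq_norm s
      rw [Complex.normSq_apply] at e1
      have e2 : (‖s‖)^2 = ‖v‖ := by rw [← norm_pow, hs2]
      rw [ht_def]; linear_combination e2 - e1
    have h6 : s.re^2 - s.im^2 = x := by
      have := congrArg Complex.re hs2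
      rw [sq, Complex.mul_re] at this
      linear_combination this
    have e4 : 4*s.re^2 = 2*t + 2*x := by linarith
    have hq : (t + 3/4)^2 < 4*s.re^2 := by
      have e5 : (t+3/4)^2 = (t^2 - t/2 + 9/16) + 2*t := by ring
      rw [e5, e4]; linarith
    have h7 : t + 3/4 < 2*s.re := by
      by_contra h; push_neg at h
      have e6 := mul_self_le_mul_self (by linarith : (0:ℝ) ≤ 2*s.re) h
      have e7 : (2*s.re)*(2*s.re) = 4*s.re^2 := by ring
      have e8 : (t+3/4)*(t+3/4) = (t+3/4)^2 := by ring
      linarith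
    have h8 : (‖s - 1‖)^2 < 1/4 := by
      have e1 := Complex.sq_norm (s - 1)
      rw [Complex.normSq_apply] at e1
      have e2 : (s-1).re = s.re - 1 := by simp
      have e3 : (s-1).im = s.im := by simp
      rw [e2, e3] at e1
      have e9 : (s.re-1)*(s.re-1)+s.im*s.im = s.re^2 + s.im^2 - 2*s.re + 1 := by ring
      linarith [e1, e9, h5, h7]
    have h9 : ‖s - 1‖ < 1/2 := by
      by_contra h; push_neg at h
      have e6 := mul_self_le_mul_self (by norm_num : (0:ℝ) ≤ 1/2) h
      have e7 : ‖s-1‖ * ‖s-1‖ = (‖s-1‖)^2 := by ring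
      linarith
    exact ⟨xpos, h9, hs2⟩
  refine ⟨fun z => 2 * (E z - 1), ?_, ?_, ?_, ?_⟩
  · intro z hz
    have hz' : ‖z‖ < 1 := by
      rwa [Metric.mem_ball, dist_zero_right] at hz
    have hden := den_ne B hB hB' z hz'
    have hp : AnalyticAt ℂ p z := by
      apply AnalyticAt.div
      · exact analyticAt_const.add (analyticAt_const.mul analyticAt_id)
      · exact analyticAt_const.add (analyticAt_const.mul analyticAt_id)
      · exact hden
    have hslit : p z ∈ Complex.slitPlane :=
      Complex.mem_slitPlane_iff.2 (Or.inl (hfacts z hz').1)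
    have hE : AnalyticAt ℂ E z := by
      rw [hE_def]
      exact ((hp.clog hslit).div analyticAt_const two_ne_zero).cexp
    exact analyticAt_const.mul (hE.sub analyticAt_const)
  · have : p 0 = 1 := by rw [hp_def]; norm_num
    simp [hE_def, this, Complex.log_one]
  · intro z hz
    have hz' : ‖z‖ < 1 := by
      rwa [Metric.mem_ball, dist_zero_right] at hz
    have h9 := (hfacts z hz').2.1
    rw [norm_mul]
    simp only [Complex.norm_two]
    linarith
  · intro z hz
    have hz' : ‖z‖ < 1 := by
      rwa [Metric.mem_ball, dist_zero_right] at hz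
    have hs2 := (hfacts z hz').2.2
    have : (1:ℂ) + 2 * (E z - 1) / 2 = E z := by ring
    rw [this, hs2]
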